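/- Mistake bound for the majority vote algorithm with a perfect expert: Let there be K ≥ 1 experts and T rounds, with expert predictions z : [K] × [T] → {0,1} and correct labels z* : [T] → {0,1}. Assume some expert e* is perfect: z(e*, t) = z*(t) for all t ∈ [T]. For each round t, let S_t = {e ∈ [K] : z(e, s) = z*(s) for all s < t} be the set of experts that made no mistake before round t, and let b_t ∈ {0,1} be any prediction agreeing with a weak majority of S_t, i.e., |{e ∈ S_t : z(e,t) = b_t}| ≥ |{e ∈ S_t : z(e,t) ≠ b_t}|. Then the number of mistakes satisfies |{t ∈ [T] : b_t ≠ z*(t)}| ≤ log₂ K. -/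

import Mathlib

private lemma bool_ne_ne {x y w : Bool} (h1 : x ≠ y) (h2 : y ≠ w) : x = w := by
  cases x <;> cases y <;> cases w <;> simp_all

/-- **Mistake bound for the majority vote algorithm with a perfect expert.**
`K` experts make binary predictions `z e t` over `T` rounds with correct labels `zstar t`.
Some expert `estar` is perfect. `S_t` is the set of experts with no mistakes before round
`t`, and the algorithm's prediction `b t` agrees with a weak majority of `S_t`.
Then the number of mistakes is at most `log₂ K`. -/
theorem majority_vote_mistake_bound (K T : ℕ) (hK : 1 ≤ K)
    (z : Fin K → Fin T → Bool) (zstar : Fin T → Bool)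
    (estar : Fin K) (hperfect : ∀ t, z estar t = zstar t)
    (b : Fin T → Bool)
    (hmaj : ∀ t : Fin T,
      ((Finset.univ.filter (fun e : Fin K =>
          (∀ s : Fin T, s < t → z e s = zstar s) ∧ z e t ≠ b t)).card) ≤
      ((Finset.univ.filter (fun e : Fin K =>
          (∀ s : Fin T, s < t → z e s = zstar s) ∧ z e t = b t)).card)) :
    ((Finset.univ.filter (fun t : Fin T => b t ≠ zstar t)).card : ℝ) ≤ Real.logb 2 K := by
  classical
  set S : ℕ → Finset (Fin K) :=
    fun n => Finset.univ.filter (fun e => ∀ s : Fin T, (s : ℕ) < n → z e s = zstar s) with hS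
  set M : ℕ → ℕ :=
    fun n => (Finset.univ.filter (fun t : Fin T => (t : ℕ) < n ∧ b t ≠ zstar t)).card with hM
  have hestar : ∀ n, estar ∈ S n := by
    intro n; simp [hS, hperfect]
  have hSpos : ∀ n, 1 ≤ (S n).card := fun n => Finset.card_pos.2 ⟨estar, hestar n⟩
  -- key invariant
  have key : ∀ n, 2 ^ (M n) * (S n).card ≤ K := by
    intro n
    induction n with
    | zero =>
      have hM0 : M 0 = 0 := by simp [hM]
      have hcard : (S 0).card ≤ K := by
        calc (S 0).card ≤ (Finset.univ : Finset (Fin K)).card := Finset.card_le_univ _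
          _ = K := by simp
      simpa [hM0] using hcard
    | succ n ih =>
      have hSsub : S (n + 1) ⊆ S n := by
        intro e he
        simp only [hS, Finset.mem_filter] at he ⊢
        exact ⟨he.1, fun s hs => he.2 s (Nat.lt_succ_of_lt hs)⟩
      by_cases hn : n < T
      · set t : Fin T := ⟨n, hn⟩ with ht
        by_cases hmis : b t = zstar t
        · -- no mistake in round n
          have hMeq : M (n + 1) = M n := by
            simp only [hM]
            congr 1
            apply Finset.filter_congr
            intro t' _
            constructor
            · rintro ⟨h1, h2⟩
              refine ⟨?_, h2⟩
              rcases Nat.lt_succ_iff_lt_or_eq.1 h1 with h | h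
              · exact h
              · have ht' : t' = t := Fin.ext h
                rw [ht'] at h2; exact absurd hmis h2
            · rintro ⟨h1, h2⟩
              exact ⟨Nat.lt_succ_of_lt h1, h2⟩
          calc 2 ^ (M (n+1)) * (S (n+1)).card = 2 ^ (M n) * (S (n+1)).card := by rw [hMeq]
            _ ≤ 2 ^ (M n) * (S n).card :=
                Nat.mul_le_mul_left _ (Finset.card_le_card hSsub)
            _ ≤ K := ih
        · -- mistake in round n
          have hMeq : M (n + 1) = M n + 1 := by
            simp only [hM]
            have hset : (Finset.univ.filter (fun t' : Fin T => (t' : ℕ) < n + 1 ∧ b t' ≠ zstar t'))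
                = insert t (Finset.univ.filter (fun t' : Fin T => (t' : ℕ) < n ∧ b t' ≠ zstar t')) := by
              ext t'
              simp only [Finset.mem_insert, Finset.mem_filter, Finset.mem_univ, true_and]
              constructor
              · rintro ⟨h1, h2⟩
                rcases Nat.lt_succ_iff_lt_or_eq.1 h1 with h | h
                · exact Or.inr ⟨h, h2⟩
                · exact Or.inl (Fin.ext h)
              · rintro (h | ⟨h1, h2⟩)
                · subst h; exact ⟨Nat.lt_succ_self n, hmis⟩
                · exact ⟨Nat.lt_succ_of_lt h1, h2⟩
            rw [hset, Finset.card_insert_of_notMem (by simp [ht])]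
          -- halving
          have hmajt := hmaj t
          have hA : (Finset.univ.filter (fun e : Fin K =>
              (∀ s : Fin T, s < t → z e s = zstar s) ∧ z e t ≠ b t))
              = (S n).filter (fun e => z e t ≠ b t) := by
            rw [hS, Finset.filter_filter]
            apply Finset.filter_congr
            intro e _
            simp only [Fin.lt_def]
            rfl
          have hB : (Finset.univ.filter (fun e : Fin K =>
              (∀ s : Fin T, s < t → z e s = zstar s) ∧ z e t = b t))
              = (S n).filter (fun e => z e t = b t) := by
            rw [hS, Finset.filter_filter]
            apply Finset.filter_congr
            intro e _
            simp only [Fin.lt_def]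
            rfl
          rw [hA, hB] at hmajt
          have hSnext : S (n + 1) = (S n).filter (fun e => z e t ≠ b t) := by
            ext e
            simp only [hS, Finset.mem_filter, Finset.mem_univ, true_and]
            constructor
            · intro h
              refine ⟨fun s hs => h s (Nat.lt_succ_of_lt hs), ?_⟩
              have hzt : z e t = zstar t := h t (Nat.lt_succ_self n)
              intro hc
              exact hmis (hc.symm.trans hzt)
            · rintro ⟨h1, h2⟩ s hs
              rcases Nat.lt_succ_iff_lt_or_eq.1 hs with h | h
              · exact h1 s h
              · have hst : s = t := Fin.ext h
                rw [hst]
                exact bool_ne_ne h2 hmis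
          have hhalf : 2 * (S (n + 1)).card ≤ (S n).card := by
            rw [hSnext]
            have hsum : ((S n).filter (fun e => z e t ≠ b t)).card
                + ((S n).filter (fun e => z e t = b t)).card = (S n).card := by
              rw [add_comm]
              exact Finset.card_filter_add_card_filter_not (fun e => z e t = b t)
            omega
          calc 2 ^ (M (n+1)) * (S (n+1)).card
              = 2 ^ (M n) * (2 * (S (n+1)).card) := by rw [hMeq]; ring
            _ ≤ 2 ^ (M n) * (S n).card := Nat.mul_le_mul_left _ hhalf
            _ ≤ K := ih
      · -- n ≥ T : M stable
        have hMeq : M (n + 1) = M n := by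
          simp only [hM]
          congr 1
          apply Finset.filter_congr
          intro t' _
          have h1 : (t' : ℕ) < n := lt_of_lt_of_le t'.isLt (Nat.le_of_not_lt hn)
          simp [h1, Nat.lt_succ_of_lt h1]
        calc 2 ^ (M (n+1)) * (S (n+1)).card = 2 ^ (M n) * (S (n+1)).card := by rw [hMeq]
          _ ≤ 2 ^ (M n) * (S n).card := Nat.mul_le_mul_left _ (Finset.card_le_card hSsub)
          _ ≤ K := ih
  -- conclude
  have hMT : (Finset.univ.filter (fun t : Fin T => b t ≠ zstar t)).card = M T := by
    simp only [hM]
    congr 1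
    apply Finset.filter_congr
    intro t _
    simp [t.isLt]
  have hfinal : 2 ^ (M T) ≤ K := by
    have hkey := key T
    have h1 := hSpos T
    nlinarith
  rw [hMT]
  have h2K : ((2 : ℝ)) ^ (M T) ≤ (K : ℝ) := by exact_mod_cast hfinal
  have heq : (M T : ℝ) = Real.logb 2 ((2 : ℝ) ^ (M T)) := by
    rw [Real.logb_pow, Real.logb_self_eq_one (by norm_num)]
    ring
  rw [heq]
  exact Real.logb_le_logb_of_le (by norm_num) (by positivity) h2K
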